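/- Suppose Γ¹ = I and Γⁿ (2 ≤ n ≤ N) are invertible diagonal d×d real matrices, and let Y_α(t) = (y¹_α(t),...,y^N_α(t)) solve the coupled system dyⁿ/dt = Γⁿ b(y¹,...,y^N, α(t)) with initial data (y¹,...,y^N). Then for all t ≥ 0 and all n, yⁿ_α(t) = yⁿ + Γⁿ (y¹_α(t) − y¹); i.e., the evolution of all components is slaved to the first component. -/

import Mathlib

/-- For the coupled system `dyⁿ/dt = Γⁿ b(y¹,...,yᴺ, α(t))` with `Γ¹ = I` and the
`Γⁿ` diagonal invertible, all components are slaved to the first: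
`yⁿ(t) = yⁿ(0) + Γⁿ (y¹(t) − y¹(0))` for all `t ≥ 0`. -/
theorem stmt_11 (d N : ℕ) [NeZero N] (A : Type*)
    (γ : Fin N → Fin d → ℝ) (hγ1 : ∀ i, γ 0 i = 1) (hγ : ∀ n i, γ n i ≠ 0)
    (b : (Fin N → EuclideanSpace ℝ (Fin d)) → A → EuclideanSpace ℝ (Fin d))
    (α : ℝ → A) (y : Fin N → ℝ → EuclideanSpace ℝ (Fin d))
    (hode : ∀ (n : Fin N) (t : ℝ), 0 ≤ t →
      HasDerivAt (y n)
        ((WithLp.equiv 2 (Fin d → ℝ)).symm fun i =>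
          γ n i * b (fun m => y m t) (α t) i) t) :
    ∀ t : ℝ, 0 ≤ t → ∀ n : Fin N,
      y n t = y n 0 + (WithLp.equiv 2 (Fin d → ℝ)).symm
        (fun i => γ n i * (y 0 t - y 0 0) i) := by
  intro t ht n
  have key : ∀ i : Fin d, y n t i - γ n i * y 0 t i = y n 0 i - γ n i * y 0 0 i := by
    intro i
    set f : ℝ → ℝ := fun s => y n s i - γ n i * y 0 s i with hf
    have hderiv : ∀ s, 0 ≤ s → HasDerivAt f 0 s := by
      intro s hs
      have p1 : HasDerivAt (fun u => y n u i)
          (γ n i * b (fun m => y m s) (α s) i) s := by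
        have := (EuclideanSpace.proj i (𝕜 := ℝ)).hasFDerivAt.comp_hasDerivAt s
          (hode n s hs)
        exact this
      have p2 : HasDerivAt (fun u => y 0 u i)
          (γ 0 i * b (fun m => y m s) (α s) i) s := by
        have := (EuclideanSpace.proj i (𝕜 := ℝ)).hasFDerivAt.comp_hasDerivAt s
          (hode 0 s hs)
        exact this
      have := p1.sub (p2.const_mul (γ n i))
      have e : γ n i * b (fun m => y m s) (α s) i - γ n i * (γ 0 i * b (fun m => y m s) (α s) i) = 0 := by
        rw [hγ1 i]
        ring
      rw [e] at this
      exact this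
    have hcont : ContinuousOn f (Set.Icc 0 t) := fun s hs =>
      (hderiv s hs.1).continuousAt.continuousWithinAt
    have := constant_of_has_deriv_right_zero hcont
      (fun s hs => (hderiv s hs.1).hasDerivWithinAt) t (Set.right_mem_Icc.mpr ht)
    simpa [hf] using this
  ext i
  have hk := key i
  simp only [PiLp.add_apply, PiLp.sub_apply, WithLp.equiv_symm_apply]
  linarith
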